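/- A word language L over a finite alphabet A is closed under insertion of letters (i.e., x·y ∈ L implies x·a·y ∈ L for all words x, y and letters a) if and only if L is a finite union of languages of the form {w : u ≼ w} for words u. -/

import Mathlib

private lemma sublistForall₂_eq_sublist {A : Type*} {l₁ l₂ : List A} :
    List.SublistForall₂ (· = ·) l₁ l₂ ↔ l₁.Sublist l₂ := by
  rw [List.sublistForall₂_iff]
  constructor
  · rintro ⟨l, h1, h2⟩
    obtain rfl : l₁ = l := List.forall₂_eq_eq_eq ▸ h1
    exact h2
  · intro h
    exact ⟨l₁, List.forall₂_refl l₁, h⟩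

theorem stmt_16 (A : Type*) [Fintype A] (L : Set (List A))
    (M : Type*) [Monoid M] [Fintype M]
    (α : List A → M) (hone : α [] = 1)
    (hmul : ∀ x y : List A, α (x ++ y) = α x * α y)
    (X : Set M) (hrec : L = α ⁻¹' X) :
    (∀ (x y : List A) (a : A), (x ++ y) ∈ L → (x ++ [a] ++ y) ∈ L) ↔
    (∃ U : Finset (List A), L = {w : List A | ∃ u ∈ U, u.Sublist w}) := by
  constructor
  · intro hins
    -- L is upward closed
    have hup : ∀ u w : List A, u.Sublist w → u ∈ L → w ∈ L := by
      have key : ∀ u w : List A, u.Sublist w → ∀ p : List A, (p ++ u) ∈ L → (p ++ w) ∈ L := by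
        intro u w h
        induction h with
        | slnil => intro p h; exact h
        | cons a h ih =>
          intro p hp
          have := ih p hp
          have := hins p _ a this
          simpa using this
        | cons_cons a h ih =>
          intro p hp
          have := ih (p ++ [a]) (by simpa using hp)
          simpa using this
      intro u w h hu
      simpa using key u w h [] (by simpa using hu)
    -- minimal elements
    set Min : Set (List A) := {u | u ∈ L ∧ ∀ v ∈ L, v.Sublist u → v = u} with hMin
    have hanti : IsAntichain (List.SublistForall₂ (· = ·)) Min := by
      rintro u ⟨huL, humin⟩ v ⟨hvL, hvmin⟩ hne h
      exact hne (hvmin u huL (sublistForall₂_eq_sublist.mp h))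
    have hpwo : Min.PartiallyWellOrderedOn (List.SublistForall₂ (· = ·)) := by
      have h1 : (Set.univ : Set A).PartiallyWellOrderedOn (· = ·) :=
        Set.finite_univ.partiallyWellOrderedOn
      have h2 := h1.partiallyWellOrderedOn_sublistForall₂ (r := (· = ·))
      exact h2.mono (by intro l _; simp)
    have hfin : Min.Finite := hanti.finite_of_partiallyWellOrderedOn hpwo
    refine ⟨hfin.toFinset, ?_⟩
    ext w
    simp only [Set.mem_setOf_eq, Set.Finite.mem_toFinset]
    constructor
    · intro hw
      -- find minimal element below w, by strong induction on length
      have : ∀ n, ∀ w : List A, w.length ≤ n → w ∈ L → ∃ u ∈ Min, u.Sublist w := by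
        intro n
        induction n with
        | zero =>
          intro w hlen hw
          refine ⟨w, ⟨hw, ?_⟩, List.Sublist.refl w⟩
          intro v hv hsub
          exact hsub.eq_of_length_le (by omega)
        | succ n ih =>
          intro w hlen hw
          by_cases hmin : ∀ v ∈ L, v.Sublist w → v = w
          · exact ⟨w, ⟨hw, hmin⟩, List.Sublist.refl w⟩
          · push_neg at hmin
            obtain ⟨v, hvL, hvs, hvne⟩ := hmin
            have hlt : v.length < w.length := hvs.length_le.lt_of_ne
              (fun h => hvne (hvs.eq_of_length h))
            obtain ⟨u, hu, husub⟩ := ih v (by omega) hvL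
            exact ⟨u, hu, husub.trans hvs⟩
      obtain ⟨u, hu, husub⟩ := this w.length w le_rfl hw
      exact ⟨u, hu, husub⟩
    · rintro ⟨u, ⟨huL, _⟩, hsub⟩
      exact hup u w hsub huL
  · rintro ⟨U, rfl⟩ x y a hxy
    obtain ⟨u, huU, hsub⟩ := hxy
    exact ⟨u, huU, hsub.trans (by simp [List.append_sublist_append_left,
      List.sublist_append_right])⟩
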